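/- Let a, b, c, d be positive reals with a > (4/3)c and b > (4/3)d (stability conditions). Define the Backus-averaged quantities for two equally weighted layers: c3333 = (((1/a)+(1/b))/2)^{-1}, c1133 = ((( (a−2c)/a + (b−2d)/b )/2)) · c3333, c2323 = (((1/c)+(1/d))/2)^{-1}. Then the condition δ = 0, i.e. c1133 = c3333 − 2·c2323, is equivalent to (c − d)(bc − ad) = 0. -/
import Mathlib


/-- For the Backus average of two equally weighted isotropic layers `(a, c)` and `(b, d)`
satisfying the stability conditions, the Thomsen-δ condition
`c1133 = c3333 − 2·c2323` is equivalent to `(c − d)(bc − ad) = 0`. -/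
theorem delta_zero_iff (a b c d : ℝ) (ha : 0 < a) (hb : 0 < b) (hc : 0 < c) (hd : 0 < d)
    (hac : a > 4 / 3 * c) (hbd : b > 4 / 3 * d) :
    let c3333 : ℝ := ((1 / a + 1 / b) / 2)⁻¹
    let c1133 : ℝ := (((a - 2 * c) / a + (b - 2 * d) / b) / 2) * c3333
    let c2323 : ℝ := ((1 / c + 1 / d) / 2)⁻¹
    (c1133 = c3333 - 2 * c2323 ↔ (c - d) * (b * c - a * d) = 0) := by
  intro c3333 c1133 c2323
  have ha' := ha.ne'
  have hb' := hb.ne'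
  have hc' := hc.ne'
  have hd' := hd.ne'
  have hab : a + b ≠ 0 := by positivity
  have hcd : c + d ≠ 0 := by positivity
  simp only [c3333, c1133, c2323]
  rw [div_add_div _ _ ha' hb', div_add_div _ _ ha' hb', div_add_div _ _ hc' hd']
  constructor
  · intro h
    have := sub_eq_zero.mpr h
    field_simp at this
    nlinarith [this]
  · intro h
    have h' : (c - d) * (b * c - a * d) = 0 := h
    field_simp
    ring_nf
    ring_nf at h'
    nlinarith [h']
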